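/- arXiv:1006.4063 — 3 statements merged into one kernel-verified Lean document; each statement's English description precedes it below -/
import Mathlib

section
/- For every natural number n ≥ 1, ∑_{j=1}^{n} j(n−j+1)H_{n−j} = (6n(n²+3n+2)H_{n+1} − 5n³ − 27n² − 22n)/36, where H_k is the k-th harmonic number and H_0 = 0. -/
open Finset

noncomputable def H (n : ℕ) : ℝ := ∑ i ∈ Finset.Icc 1 n, (1:ℝ)/i
noncomputable def H2 (n : ℕ) : ℝ := ∑ i ∈ Finset.Icc 1 n, (1:ℝ)/(i:ℝ)^2

lemma Hsucc (n : ℕ) : H (n+1) = H n + 1/((n:ℝ)+1) := by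
  rw [H, H, Finset.sum_Icc_succ_top (by omega)]
  push_cast; ring

lemma sumA (n : ℕ) : ∑ k ∈ range (n+1), ((k:ℝ)+1)*H k
    = ((n:ℝ)+1)*(((n:ℝ)+2)/2 * H (n+1) - (n:ℝ)/4 - 1) := by
  induction n with
  | zero => simp [H, Hsucc]
  | succ n ih =>
    rw [Finset.sum_range_succ, ih, Hsucc (n+1)]
    have hne : ((n:ℝ)+1)+1 ≠ 0 := by positivity
    field_simp
    push_cast
    ring

lemma sumF (n : ℕ) : ∑ k ∈ range n, ((n:ℝ)-(k:ℝ))*((k:ℝ)+1)*H k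
    = (6*(n:ℝ)*((n:ℝ)^2+3*(n:ℝ)+2)*H (n+1) - 5*(n:ℝ)^3 - 27*(n:ℝ)^2 - 22*(n:ℝ))/36 := by
  induction n with
  | zero => simp [H, Hsucc]
  | succ n ih =>
    have split : ∀ k : ℕ, (((n:ℝ)+1)-(k:ℝ))*((k:ℝ)+1)*H k
        = ((n:ℝ)-(k:ℝ))*((k:ℝ)+1)*H k + ((k:ℝ)+1)*H k := by
      intro k; ring
    have h1 : ∑ k ∈ range (n+1), (((n:ℝ)+1)-(k:ℝ))*((k:ℝ)+1)*H k
        = (∑ k ∈ range (n+1), ((n:ℝ)-(k:ℝ))*((k:ℝ)+1)*H k)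
          + ∑ k ∈ range (n+1), ((k:ℝ)+1)*H k := by
      rw [← Finset.sum_add_distrib]
      exact Finset.sum_congr rfl fun k _ => split k
    have h2 : ∑ k ∈ range (n+1), ((n:ℝ)-(k:ℝ))*((k:ℝ)+1)*H k
        = ∑ k ∈ range n, ((n:ℝ)-(k:ℝ))*((k:ℝ)+1)*H k := by
      rw [Finset.sum_range_succ]; simp
    have := sumA n
    push_cast at h1 ⊢
    rw [h1, h2, ih, this, Hsucc (n+1)]
    have hne : ((n:ℝ)+1)+1 ≠ 0 := by positivity
    field_simp
    push_cast
    ring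

theorem stmt2 (n : ℕ) (hn : 1 ≤ n) :
    ∑ j ∈ Icc 1 n, (j:ℝ)*((n:ℝ)-(j:ℝ)+1)*H (n-j)
      = (6*(n:ℝ)*((n:ℝ)^2+3*(n:ℝ)+2)*H (n+1) - 5*(n:ℝ)^3 - 27*(n:ℝ)^2 - 22*(n:ℝ))/36 := by
  rw [← sumF n]
  refine Finset.sum_nbij' (fun j => n - j) (fun k => n - k) ?_ ?_ ?_ ?_ ?_
  · intro j hj; simp only [mem_Icc] at hj; simp only [mem_range]; omega
  · intro k hk; simp only [mem_range] at hk; simp only [mem_Icc]; omega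
  · intro j hj; simp only [mem_Icc] at hj; omega
  · intro k hk; simp only [mem_range] at hk; omega
  · intro j hj
    simp only [mem_Icc] at hj
    have h1 : ((n - j : ℕ) : ℝ) = (n:ℝ) - (j:ℝ) := by
      have := hj.2; push_cast [Nat.cast_sub this]; ring
    rw [h1]; ring
end

section
/- For every natural number n ≥ 1, ∑_{j=1}^{n} H_{n+1−j}/j = 2·∑_{k=1}^{n} H_k/(k+1), where H_k is the k-th harmonic number and H_0 = 0. -/
open Finset

lemma H_succ (k : ℕ) : H (k+1) = H k + 1/((k:ℝ)+1) := by
  unfold H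
  rw [Finset.sum_Icc_succ_top (by omega)]
  push_cast
  ring

lemma H_zero : H 0 = 0 := by simp [H]

lemma reflect (n : ℕ) :
    ∑ j ∈ Icc 1 (n+1), (1:ℝ)/((n+2-j : ℕ) : ℝ) = H (n+1) := by
  unfold H
  apply Finset.sum_nbij' (i := fun j => n+2-j) (j := fun j => n+2-j)
  · intro a ha; simp only [Finset.mem_Icc] at *; omega
  · intro a ha; simp only [Finset.mem_Icc] at *; omega
  · intro a ha; simp only [Finset.mem_Icc] at ha; omega
  · intro a ha; simp only [Finset.mem_Icc] at ha; omega
  · intro a ha; rfl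

theorem stmt4 (n : ℕ) (hn : 1 ≤ n) :
    ∑ j ∈ Icc 1 n, H (n+1-j)/(j:ℝ) = 2 * ∑ k ∈ Icc 1 n, H k/((k:ℝ)+1) := by
  induction n, hn using Nat.le_induction with
  | base => simp [H]; norm_num
  | succ n hn ih =>
    have key : ∀ j ∈ Icc 1 (n+1),
        H (n+1+1-j)/(j:ℝ) = H (n+1-j)/(j:ℝ) + (1/((n+2-j:ℕ):ℝ))/(j:ℝ) := by
      intro j hj
      simp only [Finset.mem_Icc] at hj
      have e1 : n+1+1-j = (n+1-j)+1 := by omega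
      have e2 : n+2-j = (n+1-j)+1 := by omega
      rw [e1, H_succ]
      push_cast
      ring
    have T : ∑ j ∈ Icc 1 (n+1), (1/((n+2-j:ℕ):ℝ))/(j:ℝ)
        = 2 * H (n+1) / ((n:ℝ)+2) := by
      have step : ∀ j ∈ Icc 1 (n+1),
          (1/((n+2-j:ℕ):ℝ))/(j:ℝ)
          = (1/((n:ℝ)+2)) * ((1:ℝ)/(j:ℝ) + (1:ℝ)/((n+2-j:ℕ):ℝ)) := by
        intro j hj
        simp only [Finset.mem_Icc] at hj
        have hc : ((n+2-j:ℕ):ℝ) = (n:ℝ) + 2 - (j:ℝ) := by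
          push_cast [Nat.cast_sub (by omega : j ≤ n+2)]
          ring
        have hj0 : (0:ℝ) < (j:ℝ) := by exact_mod_cast (by omega : 0 < j)
        have hnj : (0:ℝ) < ((n+2-j:ℕ):ℝ) := by exact_mod_cast (by omega : 0 < n+2-j)
        have hn2 : (0:ℝ) < (n:ℝ)+2 := by positivity
        field_simp
        rw [hc]; ring
      rw [Finset.sum_congr rfl step, ← Finset.mul_sum, Finset.sum_add_distrib, reflect]
      have hH : ∑ j ∈ Icc 1 (n+1), (1:ℝ)/(j:ℝ) = H (n+1) := rfl
      rw [hH]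
      ring
    have first : ∑ j ∈ Icc 1 (n+1), H (n+1-j)/(j:ℝ)
        = ∑ j ∈ Icc 1 n, H (n+1-j)/(j:ℝ) := by
      rw [Finset.sum_Icc_succ_top (by omega)]
      simp [H_zero]
    have rhs : ∑ k ∈ Icc 1 (n+1), H k/((k:ℝ)+1)
        = ∑ k ∈ Icc 1 n, H k/((k:ℝ)+1) + H (n+1) / ((n:ℝ)+2) := by
      rw [Finset.sum_Icc_succ_top (by omega)]
      push_cast
      ring
    rw [Finset.sum_congr rfl key, Finset.sum_add_distrib, T, first, ih, rhs]
    ring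
end

section
/- Let M_n = 2(n+1)H_n − 4n for n ≥ 0 (with H_0 = 0). Then for every n ≥ 1, ∑_{j=1}^{n} M_{j−1}·M_{n−j} = 4·∑_{j=1}^{n} j·H_{j−1}·(n−j+1)·H_{n−j} − (8n/3)(n²−1)H_{n+1} + (44n/9)(n²−1), where H_k is the k-th harmonic number. -/
open Finset

noncomputable def M (n : ℕ) : ℝ := 2*((n:ℝ)+1)*H n - 4*(n:ℝ)

lemma L0 (n : ℕ) : ∑ i ∈ range n, (i:ℝ) = (n:ℝ)*((n:ℝ)-1)/2 := by
  induction n with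
  | zero => simp
  | succ m ihm => rw [Finset.sum_range_succ, ihm]; push_cast; ring

lemma L1 (n : ℕ) : ∑ i ∈ range n, ((i:ℝ)+1)*H i
    = ((n:ℝ)*((n:ℝ)+1)/2)*H n - (n:ℝ)*((n:ℝ)+1)/4 - (n:ℝ)/2 := by
  induction n with
  | zero => simp [H]
  | succ n ih =>
    rw [Finset.sum_range_succ, ih, Hsucc]
    have h1 : ((n:ℝ)+1) ≠ 0 := by positivity
    push_cast
    field_simp
    ring

lemma L3 (n : ℕ) : ∑ i ∈ range n, (i:ℝ)*((n:ℝ)-1-(i:ℝ))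
    = (n:ℝ)*((n:ℝ)-1)*((n:ℝ)-2)/6 := by
  induction n with
  | zero => simp
  | succ n ih =>
    have e : ∀ i ∈ range n, (i:ℝ)*((↑(n+1):ℝ)-1-(i:ℝ))
        = (i:ℝ)*((n:ℝ)-1-(i:ℝ)) + (i:ℝ) := by
      intro i _; push_cast; ring
    rw [Finset.sum_range_succ, Finset.sum_congr rfl e, Finset.sum_add_distrib, ih, L0]
    push_cast; ring

lemma L2 (n : ℕ) : ∑ i ∈ range n, ((i:ℝ)+1)*((n:ℝ)-1-(i:ℝ))*H i
    = (n:ℝ)/6*((n:ℝ)^2-1)*H (n+1) - 11*(n:ℝ)/36*((n:ℝ)^2-1)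
      + (n:ℝ)/6*((n:ℝ)-2)*((n:ℝ)-1) := by
  induction n with
  | zero => simp
  | succ n ih =>
    have e : ∀ i ∈ range n, ((i:ℝ)+1)*((↑(n+1):ℝ)-1-(i:ℝ))*H i
        = ((i:ℝ)+1)*((n:ℝ)-1-(i:ℝ))*H i + ((i:ℝ)+1)*H i := by
      intro i _; push_cast; ring
    rw [Finset.sum_range_succ, Finset.sum_congr rfl e, Finset.sum_add_distrib, ih, L1,
      Hsucc (n+1), Hsucc n]
    have h1 : ((n:ℝ)+1) ≠ 0 := by positivity
    have h2 : ((n:ℝ)+2) ≠ 0 := by positivity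
    push_cast
    field_simp
    ring

theorem stmt13 (n : ℕ) (hn : 1 ≤ n) :
    ∑ j ∈ Icc 1 n, M (j-1) * M (n-j)
      = 4 * ∑ j ∈ Icc 1 n, (j:ℝ) * H (j-1) * ((n:ℝ)-(j:ℝ)+1) * H (n-j)
        - (8*(n:ℝ)/3)*((n:ℝ)^2-1)*H (n+1) + (44*(n:ℝ)/9)*((n:ℝ)^2-1) := by
  -- convert Icc sums to range sums
  have cast1 : ∀ i ∈ range n, ((n-1-i : ℕ):ℝ) = (n:ℝ)-1-(i:ℝ) := by
    intro i hi
    simp only [mem_range] at hi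
    have : ((n-1-i:ℕ) + 1 + i : ℕ) = n := by omega
    have := congrArg (fun k : ℕ => (k:ℝ)) this
    push_cast at this
    linarith
  have lhs_eq : ∑ j ∈ Icc 1 n, M (j-1) * M (n-j)
      = ∑ i ∈ range n, M i * M (n-1-i) := by
    refine Finset.sum_nbij' (fun j => j-1) (fun i => i+1) ?_ ?_ ?_ ?_ ?_ <;>
      intro a ha <;> simp only [mem_Icc, mem_range] at * <;> try omega
    congr 2 <;> omega
  have rhs_eq : ∑ j ∈ Icc 1 n, (j:ℝ) * H (j-1) * ((n:ℝ)-(j:ℝ)+1) * H (n-j)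
      = ∑ i ∈ range n, ((i:ℝ)+1) * H i * ((n:ℝ)-(i:ℝ)) * H (n-1-i) := by
    refine Finset.sum_nbij' (fun j => j-1) (fun i => i+1) ?_ ?_ ?_ ?_ ?_ <;>
      intro i hi <;> simp only [mem_Icc, mem_range] at * <;> try omega
    have h1 : n-1-(i-1) = n-i := by omega
    rw [h1, Nat.cast_sub hi.1]
    push_cast
    ring
  -- expand M products
  have expand : ∑ i ∈ range n, M i * M (n-1-i)
      = ∑ i ∈ range n, (4*(((i:ℝ)+1) * H i * ((n:ℝ)-(i:ℝ)) * H (n-1-i))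
          - 8*(((i:ℝ)+1)*((n:ℝ)-1-(i:ℝ))*H i)
          - 8*((i:ℝ)*((n:ℝ)-(i:ℝ))*H (n-1-i))
          + 16*((i:ℝ)*((n:ℝ)-1-(i:ℝ)))) := by
    apply Finset.sum_congr rfl
    intro i hi
    have hc := cast1 i hi
    rw [M, M, hc]
    ring
  -- reflect the third sum
  have reflect : ∑ i ∈ range n, (i:ℝ)*((n:ℝ)-(i:ℝ))*H (n-1-i)
      = ∑ i ∈ range n, ((i:ℝ)+1)*((n:ℝ)-1-(i:ℝ))*H i := by
    rw [← Finset.sum_range_reflect]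
    apply Finset.sum_congr rfl
    intro i hi
    simp only [mem_range] at hi
    have h1 : n - 1 - (n-1-i) = i := by omega
    have h2 : ((n-1-i : ℕ):ℝ) = (n:ℝ)-1-(i:ℝ) := cast1 i (by simp [hi])
    rw [h1, h2]
    ring
  rw [lhs_eq, rhs_eq, expand]
  simp only [Finset.sum_add_distrib, Finset.sum_sub_distrib, ← Finset.mul_sum]
  rw [reflect, L2, L3]
  ring
end
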